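/- arXiv:2010.00895 — 2 statements merged into one kernel-verified Lean document; each statement's English description precedes it below -/
import Mathlib

section
/- Let ω > v²/(τ²+1)², τ ∈ ℝ \ {0,±1}, v > 0, μ > 0. Then d(ω) = inf{ S_ω(u) : u ∈ H¹_τ \ {0}, I_ω(u) = 0 } is strictly positive. More precisely, any u ∈ H¹_τ \ {0} with I_ω(u) ≤ 0 satisfies ‖u‖_{2μ+2} ≥ c for an explicit constant c > 0 depending only on τ, v, ω, μ. -/
set_option maxHeartbeats 1000000


open MeasureTheory Set Filter Real
open Topology

noncomputable section

/-- The space `H¹_τ`: piecewise `H¹` functions on the two half-lines with jump condition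
`u(0+) = τ u(0-)` (together with the extra integrability needed for the functionals). -/
structure HtauFun (τ μ : ℝ) where
  u : ℝ → ℝ
  d : ℝ → ℝ
  uL : ℝ
  uR : ℝ
  hderiv : ∀ x : ℝ, x ≠ 0 → HasDerivAt u (d x) x
  hlimL : Tendsto u (nhdsWithin 0 (Iio 0)) (nhds uL)
  hlimR : Tendsto u (nhdsWithin 0 (Ioi 0)) (nhds uR)
  hint2 : Integrable (fun x => (u x) ^ 2)
  hintd : Integrable (fun x => (d x) ^ 2)
  hintp : Integrable (fun x => |u x| ^ (2 * μ + 2))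
  hjump : uR = τ * uL

/-- `‖u'‖₂²` taken piecewise on the two half-lines. -/
def dnormSq (g : ℝ → ℝ) : ℝ :=
  (∫ x in Iio (0:ℝ), (g x) ^ 2) + ∫ x in Ioi (0:ℝ), (g x) ^ 2

/-- `‖u‖₂²`. -/
def l2Sq (f : ℝ → ℝ) : ℝ := ∫ x : ℝ, (f x) ^ 2

/-- `‖u‖_{2μ+2}^{2μ+2}`. -/
def lpP (μ : ℝ) (f : ℝ → ℝ) : ℝ := ∫ x : ℝ, |f x| ^ (2 * μ + 2)

/-- Squared `H¹_τ` norm. -/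
def HnormSq (f g : ℝ → ℝ) : ℝ := l2Sq f + dnormSq g

/-- The Nehari functional `I_ω`. -/
def Ifun (v ω μ : ℝ) (f g : ℝ → ℝ) (aL : ℝ) : ℝ :=
  dnormSq g - lpP μ f - v * aL ^ 2 + ω * l2Sq f

/-- The action functional `S_ω`. -/
def Sfun (v ω μ : ℝ) (f g : ℝ → ℝ) (aL : ℝ) : ℝ :=
  dnormSq g / 2 - lpP μ f / (2 * μ + 2) - v / 2 * aL ^ 2 + ω / 2 * l2Sq f

/-- The reduced action `S̃`. -/
def StilF (μ : ℝ) (f : ℝ → ℝ) : ℝ := μ / (2 * (μ + 1)) * lpP μ f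

/-- `u ≠ 0` as an element of `H¹_τ`. -/
def Nonzero {τ μ : ℝ} (U : HtauFun τ μ) : Prop :=
  ¬ (U.u =ᵐ[volume] fun _ => (0:ℝ))

/-- The ground-state level `d(ω)`: infimum of `S_ω` on the Nehari manifold. -/
def dInf (τ v ω μ : ℝ) : ℝ :=
  sInf {r : ℝ | ∃ U : HtauFun τ μ, Nonzero U ∧
    Ifun v ω μ U.u U.d U.uL = 0 ∧ r = Sfun v ω μ U.u U.d U.uL}

/-- The level of the second minimization problem: infimum of `S̃` on `{I_ω ≤ 0}`. -/
def dInf' (τ v ω μ : ℝ) : ℝ :=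
  sInf {r : ℝ | ∃ U : HtauFun τ μ, Nonzero U ∧
    Ifun v ω μ U.u U.d U.uL ≤ 0 ∧ r = StilF μ U.u}


lemma ae_ne_zero : ∀ᵐ x : ℝ, x ≠ 0 := by
  refine (ae_iff).2 ?_
  simpa using (by simp : volume ({0} : Set ℝ) = 0)

lemma restrict_compl_zero : volume.restrict ({(0:ℝ)}ᶜ) = volume := by
  rw [Measure.restrict_congr_set (ae_eq_univ.2 (by simp)), Measure.restrict_univ]

lemma young_ineq {ε : ℝ} (hε : 0 < ε) (a b : ℝ) : 2 * a * b ≤ ε * a ^ 2 + ε⁻¹ * b ^ 2 := by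
  have h : ε * (ε * a ^ 2 + ε⁻¹ * b ^ 2 - 2 * a * b) = (ε * a - b) ^ 2 := by
    field_simp; ring
  nlinarith [sq_nonneg (ε * a - b)]

lemma integral_split (f : ℝ → ℝ) (hf : Integrable f) :
    ∫ x, f x = (∫ x in Iio (0:ℝ), f x) + ∫ x in Ioi (0:ℝ), f x := by
  rw [← setIntegral_union (((Iic_disjoint_Ioi le_rfl).mono_left Iio_subset_Iic_self)) measurableSet_Ioi
      hf.integrableOn hf.integrableOn, Iio_union_Ioi]
  rw [show (∫ x in ({(0:ℝ)}ᶜ), f x) = ∫ x, f x from by rw [restrict_compl_zero]]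


variable {τ μ : ℝ}

lemma HtauFun.aesm_u (U : HtauFun τ μ) : AEStronglyMeasurable U.u volume := by
  have h : ContinuousOn U.u ({(0:ℝ)}ᶜ) := fun x hx =>
    ((U.hderiv x hx).continuousAt).continuousWithinAt
  have := h.aestronglyMeasurable (μ := volume) (measurableSet_singleton (0:ℝ)).compl
  rwa [restrict_compl_zero] at this

lemma HtauFun.aesm_d (U : HtauFun τ μ) : AEStronglyMeasurable U.d volume := by
  have h : U.d =ᵐ[volume] deriv U.u := by
    filter_upwards [ae_ne_zero] with x hx
    exact ((U.hderiv x hx).deriv).symm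
  exact ((measurable_deriv U.u).aestronglyMeasurable).congr h.symm

lemma HtauFun.hg_int (U : HtauFun τ μ) : Integrable (fun x => 2 * U.u x * U.d x) := by
  refine Integrable.mono (U.hint2.add U.hintd) ?_ ?_
  · exact (aestronglyMeasurable_const.mul U.aesm_u).mul U.aesm_d
  · filter_upwards with x
    have h := young_ineq one_pos |U.u x| |U.d x|
    simp only [one_mul, inv_one, sq_abs] at h
    simp only [Pi.add_apply]
    rw [Real.norm_eq_abs, Real.norm_eq_abs,
      abs_of_nonneg (by positivity : (0:ℝ) ≤ U.u x ^ 2 + U.d x ^ 2)]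
    calc |2 * U.u x * U.d x| = 2 * |U.u x| * |U.d x| := by
          rw [abs_mul, abs_mul]; simp
      _ ≤ U.u x ^ 2 + U.d x ^ 2 := h

lemma HtauFun.ptwise_left (U : HtauFun τ μ) {ε : ℝ} (hε : 0 < ε) {x : ℝ} (hx : x < 0) :
    U.u x ^ 2 ≤ ε * (∫ t in Iio (0:ℝ), U.u t ^ 2) + ε⁻¹ * (∫ t in Iio (0:ℝ), U.d t ^ 2) := by
  set g : ℝ → ℝ := fun t => 2 * U.u t * U.d t with hgdef
  have hgi : Integrable g := U.hg_int
  have hFTC : ∀ a : ℝ, a ≤ x → U.u x ^ 2 - U.u a ^ 2 = ∫ t in a..x, g t := by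
    intro a ha
    refine (intervalIntegral.integral_eq_sub_of_hasDerivAt (f := fun s => U.u s ^ 2) (f' := g) ?_ ?_).symm
    · intro t ht
      rw [uIcc_of_le ha] at ht
      have ht0 : t ≠ 0 := ne_of_lt (lt_of_le_of_lt ht.2 hx)
      have h2 := (U.hderiv t ht0).pow 2
      exact h2.congr_deriv (by simp [hgdef])
    · exact hgi.intervalIntegrable
  have hTi : Tendsto (fun a => ∫ t in a..x, g t) atBot (𝓝 (∫ t in Iic x, g t)) :=
    intervalIntegral_tendsto_integral_Iic x hgi.integrableOn tendsto_id
  have hT : Tendsto (fun a => U.u a ^ 2) atBot (𝓝 (U.u x ^ 2 - ∫ t in Iic x, g t)) := by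
    refine ((tendsto_const_nhds (x := U.u x ^ 2)).sub hTi).congr' ?_
    filter_upwards [eventually_le_atBot x] with a ha
    rw [← hFTC a ha]; ring
  set L := U.u x ^ 2 - ∫ t in Iic x, g t with hLdef
  have hL0 : 0 ≤ L := ge_of_tendsto hT (Eventually.of_forall fun a => sq_nonneg _)
  have hLle : L ≤ 0 := by
    by_contra h
    push_neg at h
    obtain ⟨M, hM⟩ := eventually_atBot.1 (hT.eventually (eventually_gt_nhds (half_lt_self h)))
    have hci : IntegrableOn (fun _ : ℝ => L / 2) (Iic M) := by
      refine Integrable.mono (U.hint2.integrableOn) aestronglyMeasurable_const ?_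
      filter_upwards [ae_restrict_mem measurableSet_Iic] with t ht
      rw [Real.norm_eq_abs, Real.norm_eq_abs, abs_of_nonneg (by positivity),
        abs_of_nonneg (sq_nonneg _)]
      exact (hM t ht).le
    rw [integrableOn_const_iff] at hci
    rcases hci with h1 | h1
    · exact absurd h1 (by simp [h.ne'])
    · exact absurd h1 (by simp [Real.volume_Iic])
  have hxeq : U.u x ^ 2 = ∫ t in Iic x, g t := by
    have : L = 0 := le_antisymm hLle hL0
    rw [hLdef] at this; linarith
  have hmono1 : (∫ t in Iic x, g t) ≤ ∫ t in Iic x, (ε * U.u t ^ 2 + ε⁻¹ * U.d t ^ 2) :=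
    integral_mono_ae hgi.integrableOn
      (((U.hint2.const_mul ε).add (U.hintd.const_mul ε⁻¹)).integrableOn)
      (Eventually.of_forall fun t => young_ineq hε _ _)
  have hmono2 : (∫ t in Iic x, (ε * U.u t ^ 2 + ε⁻¹ * U.d t ^ 2))
      ≤ ∫ t in Iio (0:ℝ), (ε * U.u t ^ 2 + ε⁻¹ * U.d t ^ 2) := by
    refine setIntegral_mono_set
      (((U.hint2.const_mul ε).add (U.hintd.const_mul ε⁻¹)).integrableOn)
      (Eventually.of_forall fun t => by positivity) ?_
    exact HasSubset.Subset.eventuallyLE (fun t ht => lt_of_le_of_lt ht hx)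
  have heq : (∫ t in Iio (0:ℝ), (ε * U.u t ^ 2 + ε⁻¹ * U.d t ^ 2))
      = ε * (∫ t in Iio (0:ℝ), U.u t ^ 2) + ε⁻¹ * (∫ t in Iio (0:ℝ), U.d t ^ 2) := by
    rw [integral_add ((U.hint2.const_mul ε).integrableOn) ((U.hintd.const_mul ε⁻¹).integrableOn),
      integral_const_mul, integral_const_mul]
  rw [hxeq, ← heq]
  exact le_trans hmono1 hmono2

lemma HtauFun.ptwise_right (U : HtauFun τ μ) {ε : ℝ} (hε : 0 < ε) {x : ℝ} (hx : 0 < x) :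
    U.u x ^ 2 ≤ ε * (∫ t in Ioi (0:ℝ), U.u t ^ 2) + ε⁻¹ * (∫ t in Ioi (0:ℝ), U.d t ^ 2) := by
  set g : ℝ → ℝ := fun t => 2 * U.u t * U.d t with hgdef
  have hgi : Integrable g := U.hg_int
  have hFTC : ∀ b : ℝ, x ≤ b → U.u b ^ 2 - U.u x ^ 2 = ∫ t in x..b, g t := by
    intro b hb
    refine (intervalIntegral.integral_eq_sub_of_hasDerivAt
      (f := fun s => U.u s ^ 2) (f' := g) ?_ ?_).symm
    · intro t ht
      rw [uIcc_of_le hb] at ht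
      have ht0 : t ≠ 0 := ne_of_gt (lt_of_lt_of_le hx ht.1)
      have h2 := (U.hderiv t ht0).pow 2
      exact h2.congr_deriv (by simp [hgdef])
    · exact hgi.intervalIntegrable
  have hTi : Tendsto (fun b => ∫ t in x..b, g t) atTop (𝓝 (∫ t in Ioi x, g t)) :=
    intervalIntegral_tendsto_integral_Ioi x hgi.integrableOn tendsto_id
  have hT : Tendsto (fun b => U.u b ^ 2) atTop (𝓝 (U.u x ^ 2 + ∫ t in Ioi x, g t)) := by
    refine ((tendsto_const_nhds (x := U.u x ^ 2)).add hTi).congr' ?_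
    filter_upwards [eventually_ge_atTop x] with b hb
    rw [← hFTC b hb]; ring
  set L := U.u x ^ 2 + ∫ t in Ioi x, g t with hLdef
  have hL0 : 0 ≤ L := ge_of_tendsto hT (Eventually.of_forall fun a => sq_nonneg _)
  have hLle : L ≤ 0 := by
    by_contra h
    push_neg at h
    obtain ⟨M, hM⟩ := eventually_atTop.1 (hT.eventually (eventually_gt_nhds (half_lt_self h)))
    have hci : IntegrableOn (fun _ : ℝ => L / 2) (Ici M) := by
      refine Integrable.mono (U.hint2.integrableOn) aestronglyMeasurable_const ?_
      filter_upwards [ae_restrict_mem measurableSet_Ici] with t ht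
      rw [Real.norm_eq_abs, Real.norm_eq_abs, abs_of_nonneg (by positivity),
        abs_of_nonneg (sq_nonneg _)]
      exact (hM t ht).le
    rw [integrableOn_const_iff] at hci
    rcases hci with h1 | h1
    · exact absurd h1 (by simp [h.ne'])
    · exact absurd h1 (by simp [Real.volume_Ici])
  have hxeq : U.u x ^ 2 = ∫ t in Ioi x, (-g t) := by
    have : L = 0 := le_antisymm hLle hL0
    rw [hLdef] at this
    rw [integral_neg]; linarith
  have hmono1 : (∫ t in Ioi x, (-g t)) ≤ ∫ t in Ioi x, (ε * U.u t ^ 2 + ε⁻¹ * U.d t ^ 2) := by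
    refine integral_mono_ae hgi.neg.integrableOn
      (((U.hint2.const_mul ε).add (U.hintd.const_mul ε⁻¹)).integrableOn)
      (Eventually.of_forall fun t => ?_)
    have h := young_ineq hε (-U.u t) (U.d t)
    simp only [hgdef]; nlinarith [h]
  have hmono2 : (∫ t in Ioi x, (ε * U.u t ^ 2 + ε⁻¹ * U.d t ^ 2))
      ≤ ∫ t in Ioi (0:ℝ), (ε * U.u t ^ 2 + ε⁻¹ * U.d t ^ 2) := by
    refine setIntegral_mono_set
      (((U.hint2.const_mul ε).add (U.hintd.const_mul ε⁻¹)).integrableOn)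
      (Eventually.of_forall fun t => by positivity) ?_
    exact HasSubset.Subset.eventuallyLE (fun t ht => lt_trans hx ht)
  have heq : (∫ t in Ioi (0:ℝ), (ε * U.u t ^ 2 + ε⁻¹ * U.d t ^ 2))
      = ε * (∫ t in Ioi (0:ℝ), U.u t ^ 2) + ε⁻¹ * (∫ t in Ioi (0:ℝ), U.d t ^ 2) := by
    rw [integral_add ((U.hint2.const_mul ε).integrableOn) ((U.hintd.const_mul ε⁻¹).integrableOn),
      integral_const_mul, integral_const_mul]
  rw [hxeq, ← heq]
  exact le_trans hmono1 hmono2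

lemma HtauFun.trace_left (U : HtauFun τ μ) {ε : ℝ} (hε : 0 < ε) :
    U.uL ^ 2 ≤ ε * (∫ t in Iio (0:ℝ), U.u t ^ 2) + ε⁻¹ * (∫ t in Iio (0:ℝ), U.d t ^ 2) := by
  have T : Tendsto (fun x => U.u x ^ 2) (nhdsWithin 0 (Iio 0)) (𝓝 (U.uL ^ 2)) := U.hlimL.pow 2
  refine le_of_tendsto T ?_
  filter_upwards [self_mem_nhdsWithin] with x hx
  exact U.ptwise_left hε hx

lemma HtauFun.trace_right (U : HtauFun τ μ) {ε : ℝ} (hε : 0 < ε) :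
    U.uR ^ 2 ≤ ε * (∫ t in Ioi (0:ℝ), U.u t ^ 2) + ε⁻¹ * (∫ t in Ioi (0:ℝ), U.d t ^ 2) := by
  have T : Tendsto (fun x => U.u x ^ 2) (nhdsWithin 0 (Ioi 0)) (𝓝 (U.uR ^ 2)) := U.hlimR.pow 2
  refine le_of_tendsto T ?_
  filter_upwards [self_mem_nhdsWithin] with x hx
  exact U.ptwise_right hε hx

lemma HtauFun.dnormSq_nonneg (U : HtauFun τ μ) : 0 ≤ dnormSq U.d :=
  add_nonneg (setIntegral_nonneg measurableSet_Iio fun t _ => sq_nonneg _)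
    (setIntegral_nonneg measurableSet_Ioi fun t _ => sq_nonneg _)

lemma HtauFun.l2Sq_nonneg (U : HtauFun τ μ) : 0 ≤ l2Sq U.u :=
  integral_nonneg fun t => sq_nonneg _

lemma HtauFun.sup_bound (U : HtauFun τ μ) {x : ℝ} (hx : x ≠ 0) :
    U.u x ^ 2 ≤ l2Sq U.u + dnormSq U.d := by
  have hA1 : (∫ t in Iio (0:ℝ), U.u t ^ 2) ≤ l2Sq U.u :=
    setIntegral_le_integral U.hint2 (Eventually.of_forall fun t => sq_nonneg _)
  have hA2 : (∫ t in Ioi (0:ℝ), U.u t ^ 2) ≤ l2Sq U.u :=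
    setIntegral_le_integral U.hint2 (Eventually.of_forall fun t => sq_nonneg _)
  have hB1 : (∫ t in Iio (0:ℝ), U.d t ^ 2) ≤ dnormSq U.d :=
    le_add_of_nonneg_right (setIntegral_nonneg measurableSet_Ioi fun t _ => sq_nonneg _)
  have hB2 : (∫ t in Ioi (0:ℝ), U.d t ^ 2) ≤ dnormSq U.d :=
    le_add_of_nonneg_left (setIntegral_nonneg measurableSet_Iio fun t _ => sq_nonneg _)
  rcases lt_or_gt_of_ne hx with h | h
  · have := U.ptwise_left one_pos h
    simp only [inv_one, one_mul] at this
    linarith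
  · have := U.ptwise_right one_pos h
    simp only [inv_one, one_mul] at this
    linarith

lemma HtauFun.l2Sq_pos (U : HtauFun τ μ) (h : Nonzero U) : 0 < l2Sq U.u := by
  rcases lt_or_eq_of_le U.l2Sq_nonneg with h1 | h1
  · exact h1
  · exfalso
    apply h
    have h2 : (fun x => U.u x ^ 2) =ᵐ[volume] (fun _ => (0:ℝ)) :=
      (integral_eq_zero_iff_of_nonneg_ae (Eventually.of_forall fun t => sq_nonneg _)
        U.hint2).1 h1.symm
    filter_upwards [h2] with x hx2
    exact pow_eq_zero_iff two_ne_zero |>.1 hx2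

lemma abs_rpow_decomp (μ t : ℝ) (hμ : 0 < μ) : |t| ^ (2 * μ + 2) = (t ^ 2) ^ μ * t ^ 2 := by
  rcases eq_or_ne t 0 with rfl | ht
  · simp [Real.zero_rpow (by positivity : (2 * μ + 2 : ℝ) ≠ 0), Real.zero_rpow hμ.ne']
  · have h0 : 0 < |t| := abs_pos.2 ht
    have e1 : (t ^ 2 : ℝ) = |t| ^ (2 : ℝ) := by rw [Real.rpow_two, sq_abs]
    rw [Real.rpow_add h0, e1, ← Real.rpow_mul (abs_nonneg t)]

lemma key_estimate (τ v ω μ : ℝ) (hv : 0 < v) (hμ : 0 < μ)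
    (hω : ω > v ^ 2 / (τ ^ 2 + 1) ^ 2) :
    ∃ c₀ : ℝ, 0 < c₀ ∧ ∀ U : HtauFun τ μ, Nonzero U →
      Ifun v ω μ U.u U.d U.uL ≤ 0 → c₀ ≤ lpP μ U.u := by
  set a : ℝ := τ ^ 2 + 1 with hadef
  have ha : 0 < a := by positivity
  have h1 : v ^ 2 < ω * a ^ 2 := (div_lt_iff₀ (by positivity)).1 hω
  have hωpos : 0 < ω := by nlinarith
  have hvω : v / a < ω * a / v := by rw [div_lt_div_iff₀ ha hv]; nlinarith
  set ε : ℝ := (v / a + ω * a / v) / 2 with hεdef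
  have hε1 : v / a < ε := by rw [hεdef]; linarith
  have hε2 : ε < ω * a / v := by rw [hεdef]; linarith
  have hεpos : 0 < ε := lt_trans (by positivity) hε1
  set C₁ : ℝ := 1 - v / (a * ε) with hC1def
  set C₂ : ℝ := ω - v * ε / a with hC2def
  have hC1 : 0 < C₁ := by
    rw [hC1def, sub_pos, div_lt_one (by positivity)]
    calc v = (v / a) * a := by field_simp
    _ < ε * a := by exact mul_lt_mul_of_pos_right hε1 ha
    _ = a * ε := mul_comm _ _
  have hC2 : 0 < C₂ := by
    rw [hC2def, sub_pos, div_lt_iff₀ ha]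
    calc v * ε < v * (ω * a / v) := by exact mul_lt_mul_of_pos_left hε2 hv
    _ = ω * a := by field_simp
  set C : ℝ := min C₁ C₂ with hCdef
  have hC : 0 < C := lt_min hC1 hC2
  refine ⟨C * C ^ (1 / μ), by positivity, ?_⟩
  intro U hnz hI
  set l2 := l2Sq U.u with hl2def
  set dn := dnormSq U.d with hdndef
  have hl2pos : 0 < l2 := U.l2Sq_pos hnz
  have hdn : 0 ≤ dn := U.dnormSq_nonneg
  set H := l2 + dn with hHdef
  have hH : 0 < H := by positivity
  -- trace estimate
  have hsplit : l2 = (∫ t in Iio (0:ℝ), U.u t ^ 2) + ∫ t in Ioi (0:ℝ), U.u t ^ 2 :=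
    integral_split _ U.hint2
  have htL := U.trace_left hεpos
  have htR := U.trace_right hεpos
  have hjump : U.uR ^ 2 = τ ^ 2 * U.uL ^ 2 := by rw [U.hjump]; ring
  have htrace : a * U.uL ^ 2 ≤ ε * l2 + ε⁻¹ * dn := by
    rw [hsplit, hdndef]
    unfold dnormSq
    rw [hadef]
    nlinarith [htL, htR, hjump]
  have hvtrace : v * U.uL ^ 2 ≤ (v * ε / a) * l2 + (v / (a * ε)) * dn := by
    have h2 : v * U.uL ^ 2 = (v / a) * (a * U.uL ^ 2) := by field_simp
    have h3 : (v / a) * (ε * l2 + ε⁻¹ * dn) = (v * ε / a) * l2 + (v / (a * ε)) * dn := by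
      field_simp
    rw [h2, ← h3]
    exact mul_le_mul_of_nonneg_left htrace (by positivity)
  have hQ : C * H ≤ dn - v * U.uL ^ 2 + ω * l2 := by
    have e1 : C₁ * dn + C₂ * l2 ≤ dn - v * U.uL ^ 2 + ω * l2 := by
      rw [hC1def, hC2def]; linarith [hvtrace]
    have e2 : C * H ≤ C₁ * dn + C₂ * l2 := by
      have g1 : C * l2 ≤ C₂ * l2 := mul_le_mul_of_nonneg_right (min_le_right _ _) hl2pos.le
      have g2 : C * dn ≤ C₁ * dn := mul_le_mul_of_nonneg_right (min_le_left _ _) hdn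
      calc C * H = C * l2 + C * dn := by rw [hHdef]; ring
      _ ≤ C₂ * l2 + C₁ * dn := add_le_add g1 g2
      _ = C₁ * dn + C₂ * l2 := by ring
    linarith
  -- Sobolev-type bound
  have hsup : ∀ᵐ x : ℝ, |U.u x| ^ (2 * μ + 2) ≤ H ^ μ * U.u x ^ 2 := by
    filter_upwards [ae_ne_zero] with x hx
    have hx2 : U.u x ^ 2 ≤ H := U.sup_bound hx
    rw [abs_rpow_decomp μ _ hμ]
    exact mul_le_mul_of_nonneg_right
      (Real.rpow_le_rpow (sq_nonneg _) hx2 hμ.le) (sq_nonneg _)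
  have hlpP : lpP μ U.u ≤ H ^ μ * l2 := by
    have := integral_mono_ae U.hintp (U.hint2.const_mul (H ^ μ)) hsup
    rwa [integral_const_mul] at this
  have hlpP2 : lpP μ U.u ≤ H ^ μ * H := by
    refine le_trans hlpP (mul_le_mul_of_nonneg_left ?_ (Real.rpow_nonneg hH.le μ))
    linarith
  have hQlp : dn - v * U.uL ^ 2 + ω * l2 ≤ lpP μ U.u := by
    have := hI
    unfold Ifun at this
    rw [← hl2def, ← hdndef] at this
    linarith
  have hCH : C ≤ H ^ μ := by
    refine le_of_mul_le_mul_right ?_ hH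
    calc C * H ≤ lpP μ U.u := le_trans hQ hQlp
    _ ≤ H ^ μ * H := hlpP2
  have hHC : C ^ (1 / μ) ≤ H := by
    have h4 := Real.rpow_le_rpow hC.le hCH (by positivity : (0:ℝ) ≤ 1 / μ)
    rwa [← Real.rpow_mul hH.le, mul_one_div_cancel hμ.ne', Real.rpow_one] at h4
  calc C * C ^ (1 / μ) ≤ C * H := mul_le_mul_of_nonneg_left hHC hC.le
  _ ≤ lpP μ U.u := le_trans hQ hQlp

def w0 : ℝ → ℝ := fun x => x * Real.exp (-x ^ 2)
def dw0 : ℝ → ℝ := fun x => (1 - 2 * x ^ 2) * Real.exp (-x ^ 2)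

lemma w0_deriv (x : ℝ) : HasDerivAt w0 (dw0 x) x := by
  have h1 : HasDerivAt (fun y : ℝ => -y ^ 2) (-(2 * x)) x := by
    exact (hasDerivAt_pow 2 x).neg.congr_deriv (by simp)
  have h2 : HasDerivAt (fun y : ℝ => Real.exp (-y ^ 2))
      (Real.exp (-x ^ 2) * -(2 * x)) x := h1.exp
  have h3 := (hasDerivAt_id x).mul h2
  refine h3.congr_deriv ?_
  unfold dw0; simp; ring

lemma rpow_nat2 (x : ℝ) : |x| ^ (2 : ℝ) = x ^ 2 := by rw [Real.rpow_two, sq_abs]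

lemma rpow_nat4 (x : ℝ) : |x| ^ (4 : ℝ) = x ^ 4 := by
  rw [show (4 : ℝ) = ((4 : ℕ) : ℝ) by norm_num, Real.rpow_natCast, ← abs_pow,
    abs_of_nonneg (by positivity)]

lemma exp_sq_split (x : ℝ) : Real.exp (-2 * x ^ 2) = Real.exp (-x ^ 2) * Real.exp (-x ^ 2) := by
  rw [← Real.exp_add]; ring_nf

lemma integrable_abs_rpow_mul_exp_neg_mul_sq {b : ℝ} (hb : 0 < b) {s : ℝ} (hs : -1 < s) :
    Integrable fun x : ℝ => |x| ^ s * Real.exp (-b * x ^ 2) := by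
  have hpos : IntegrableOn (fun x : ℝ => |x| ^ s * Real.exp (-b * x ^ 2)) (Ioi 0) := by
    refine (integrableOn_rpow_mul_exp_neg_mul_sq hb hs).congr_fun ?_ measurableSet_Ioi
    intro x hx
    simp [abs_of_pos (show (0:ℝ) < x from hx)]
  rw [← integrableOn_univ, ← @Iio_union_Ici _ _ (0 : ℝ), integrableOn_union,
    integrableOn_Ici_iff_integrableOn_Ioi]
  refine ⟨?_, hpos⟩
  rw [← (Measure.measurePreserving_neg (volume : Measure ℝ)).integrableOn_comp_preimage
      (Homeomorph.neg ℝ).measurableEmbedding]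
  simp only [Function.comp_def, neg_sq, neg_preimage, neg_Iio, neg_neg, neg_zero, abs_neg]
  exact hpos

lemma w0_int2 : Integrable (fun x => (w0 x) ^ 2) := by
  have base := integrable_abs_rpow_mul_exp_neg_mul_sq (b := 2) two_pos (s := 2) (by norm_num)
  refine base.congr (Eventually.of_forall fun x => ?_)
  unfold w0
  simp only [rpow_nat2, exp_sq_split]
  ring

lemma w0_intd : Integrable (fun x => (dw0 x) ^ 2) := by
  have i0 := integrable_exp_neg_mul_sq (b := 2) two_pos
  have i2 := integrable_abs_rpow_mul_exp_neg_mul_sq (b := 2) two_pos (s := 2) (by norm_num)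
  have i4 := integrable_abs_rpow_mul_exp_neg_mul_sq (b := 2) two_pos (s := 4) (by norm_num)
  refine ((i0.sub (i2.const_mul 4)).add (i4.const_mul 4)).congr
    (Eventually.of_forall fun x => ?_)
  unfold dw0
  simp only [Pi.add_apply, Pi.sub_apply, rpow_nat2, rpow_nat4, exp_sq_split]
  ring

lemma w0_intp {μ : ℝ} (hμ : 0 < μ) : Integrable (fun x => |w0 x| ^ (2 * μ + 2)) := by
  have base := integrable_abs_rpow_mul_exp_neg_mul_sq (b := 2 * μ + 2) (by linarith)
    (s := 2 * μ + 2) (by linarith)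
  refine base.congr (Eventually.of_forall fun x => ?_)
  unfold w0
  simp only [abs_mul, Real.abs_exp]
  rw [Real.mul_rpow (abs_nonneg x) (Real.exp_nonneg _), ← Real.exp_mul,
    show -x ^ 2 * (2 * μ + 2) = -(2 * μ + 2) * x ^ 2 from by ring]

lemma w0_cont : Continuous w0 :=
  continuous_id.mul ((continuous_pow 2).neg.rexp)

lemma w0_ne : ¬ (w0 =ᵐ[volume] fun _ => (0 : ℝ)) := by
  intro h
  have := (w0_cont.ae_eq_iff_eq volume continuous_const).1 h
  have h1 := congrFun this 1
  unfold w0 at h1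
  simp only [one_mul] at h1
  exact (Real.exp_ne_zero _) h1

def W0 (τ μ : ℝ) (hμ : 0 < μ) : HtauFun τ μ where
  u := w0
  d := dw0
  uL := 0
  uR := 0
  hderiv := fun x _ => w0_deriv x
  hlimL := by
    have : Tendsto w0 (𝓝 0) (𝓝 0) := by
      have := w0_cont.tendsto 0
      simpa [w0] using this
    exact this.mono_left nhdsWithin_le_nhds
  hlimR := by
    have : Tendsto w0 (𝓝 0) (𝓝 0) := by
      have := w0_cont.tendsto 0
      simpa [w0] using this
    exact this.mono_left nhdsWithin_le_nhds
  hint2 := w0_int2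
  hintd := w0_intd
  hintp := w0_intp hμ
  hjump := by ring

lemma nehari_nonempty (τ v ω μ : ℝ) (hμ : 0 < μ) (hω : 0 < ω) :
    ∃ U : HtauFun τ μ, Nonzero U ∧ Ifun v ω μ U.u U.d U.uL = 0 := by
  have hnz0 : Nonzero (W0 τ μ hμ) := w0_ne
  have hl20 : 0 < l2Sq w0 := (W0 τ μ hμ).l2Sq_pos hnz0
  have hdn0 : 0 ≤ dnormSq dw0 := (W0 τ μ hμ).dnormSq_nonneg
  set P₀ : ℝ := lpP μ w0 with hPdef
  set Q₀ : ℝ := dnormSq dw0 + ω * l2Sq w0 with hQdef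
  have hQ : 0 < Q₀ := by positivity
  have hP : 0 < P₀ := by
    rcases lt_or_eq_of_le (integral_nonneg fun x =>
      Real.rpow_nonneg (abs_nonneg _) _ : (0:ℝ) ≤ lpP μ w0) with h | h
    · exact h
    · exfalso
      apply w0_ne
      have h2 := (integral_eq_zero_iff_of_nonneg_ae
        (Eventually.of_forall fun x => Real.rpow_nonneg (abs_nonneg _) _)
        (w0_intp hμ)).1 h.symm
      filter_upwards [h2] with x hx
      by_contra hne
      have : (0:ℝ) < |w0 x| ^ (2 * μ + 2) :=
        Real.rpow_pos_of_pos (abs_pos.2 hne) _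
      simp only [Pi.zero_apply] at hx
      rw [hx] at this
      exact lt_irrefl 0 this
  set l : ℝ := (Q₀ / P₀) ^ (1 / (2 * μ)) with hldef
  have hl : 0 < l := Real.rpow_pos_of_pos (by positivity) _
  have hl2μ : l ^ (2 * μ : ℝ) = Q₀ / P₀ := by
    rw [hldef, ← Real.rpow_mul (by positivity : (0:ℝ) ≤ Q₀ / P₀),
      one_div_mul_cancel (by positivity : (2 * μ : ℝ) ≠ 0), Real.rpow_one]
  have hlp : l ^ (2 * μ + 2 : ℝ) = (Q₀ / P₀) * l ^ 2 := by
    rw [Real.rpow_add hl, hl2μ, Real.rpow_two]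
  refine ⟨⟨fun x => l * w0 x, fun x => l * dw0 x, 0, 0,
    fun x hx => (w0_deriv x).const_mul l,
    ?_, ?_, ?_, ?_, ?_, by ring⟩, ?_, ?_⟩
  · have h : Tendsto (fun x => l * w0 x) (𝓝 0) (𝓝 (l * w0 0)) :=
      (continuous_const.mul w0_cont).tendsto 0
    have h0 : l * w0 0 = 0 := by simp [w0]
    rw [h0] at h
    exact h.mono_left nhdsWithin_le_nhds
  · have h : Tendsto (fun x => l * w0 x) (𝓝 0) (𝓝 (l * w0 0)) :=
      (continuous_const.mul w0_cont).tendsto 0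
    have h0 : l * w0 0 = 0 := by simp [w0]
    rw [h0] at h
    exact h.mono_left nhdsWithin_le_nhds
  · exact (w0_int2.const_mul (l ^ 2)).congr (Eventually.of_forall fun x => by ring)
  · exact (w0_intd.const_mul (l ^ 2)).congr (Eventually.of_forall fun x => by ring)
  · refine ((w0_intp hμ).const_mul (l ^ (2 * μ + 2 : ℝ))).congr
      (Eventually.of_forall fun x => ?_)
    show l ^ (2 * μ + 2 : ℝ) * |w0 x| ^ (2 * μ + 2) = |l * w0 x| ^ (2 * μ + 2)
    rw [abs_mul, Real.mul_rpow (abs_nonneg l) (abs_nonneg _), abs_of_pos hl]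
  · -- Nonzero
    intro h
    apply w0_ne
    filter_upwards [h] with x hx
    have hx' : l * w0 x = 0 := hx
    rcases mul_eq_zero.1 hx' with h1 | h1
    · exact absurd h1 hl.ne'
    · exact h1
  · -- Ifun = 0
    show dnormSq (fun x => l * dw0 x) - lpP μ (fun x => l * w0 x) - v * 0 ^ 2
      + ω * l2Sq (fun x => l * w0 x) = 0
    have e1 : dnormSq (fun x => l * dw0 x) = l ^ 2 * dnormSq dw0 := by
      unfold dnormSq
      rw [show (fun x => (l * dw0 x) ^ 2) = fun x => l ^ 2 * (dw0 x) ^ 2 from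
        funext fun x => by ring]
      rw [integral_const_mul, integral_const_mul]; ring
    have e2 : l2Sq (fun x => l * w0 x) = l ^ 2 * l2Sq w0 := by
      unfold l2Sq
      simp only [mul_pow]
      rw [integral_const_mul]
    have e3 : lpP μ (fun x => l * w0 x) = l ^ (2 * μ + 2 : ℝ) * P₀ := by
      unfold lpP
      rw [hPdef]
      unfold lpP
      rw [← integral_const_mul]
      congr 1
      funext x
      show |l * w0 x| ^ (2 * μ + 2) = l ^ (2 * μ + 2 : ℝ) * |w0 x| ^ (2 * μ + 2)
      rw [abs_mul, Real.mul_rpow (abs_nonneg l) (abs_nonneg _), abs_of_pos hl]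
    rw [e1, e2, e3, hlp]
    field_simp
    rw [hQdef]
    ring

/-- `d(ω) > 0`; more precisely there is `c > 0` (depending only on `τ,v,ω,μ`)
such that every nonzero `u ∈ H¹_τ` with `I_ω(u) ≤ 0` satisfies `‖u‖_{2μ+2} ≥ c`. -/
theorem dInf_positive
    (τ v ω μ : ℝ) (hτ0 : τ ≠ 0) (hτ1 : τ ≠ 1) (hτm1 : τ ≠ -1)
    (hv : 0 < v) (hμ : 0 < μ) (hω : ω > v ^ 2 / (τ ^ 2 + 1) ^ 2) :
    0 < dInf τ v ω μ ∧
    ∃ c : ℝ, 0 < c ∧ ∀ U : HtauFun τ μ, Nonzero U →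
      Ifun v ω μ U.u U.d U.uL ≤ 0 → (lpP μ U.u) ^ (1 / (2 * μ + 2)) ≥ c := by
  obtain ⟨c₀, hc₀, hest⟩ := key_estimate τ v ω μ hv hμ hω
  have hωpos : 0 < ω := lt_of_le_of_lt (by positivity) hω
  constructor
  · unfold dInf
    have hne : {r : ℝ | ∃ U : HtauFun τ μ, Nonzero U ∧
        Ifun v ω μ U.u U.d U.uL = 0 ∧ r = Sfun v ω μ U.u U.d U.uL}.Nonempty := by
      obtain ⟨U, hnz, hI⟩ := nehari_nonempty τ v ω μ hμ hωpos
      exact ⟨_, U, hnz, hI, rfl⟩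
    have hm : (0:ℝ) < μ / (2 * (μ + 1)) * c₀ := by positivity
    refine lt_of_lt_of_le hm (le_csInf hne ?_)
    rintro r ⟨U, hnz, hI, rfl⟩
    have hμ1 : (μ + 1 : ℝ) ≠ 0 := by positivity
    have hμ2 : (2 * μ + 2 : ℝ) ≠ 0 := by positivity
    have hrel : Sfun v ω μ U.u U.d U.uL
        = Ifun v ω μ U.u U.d U.uL / 2 + μ / (2 * (μ + 1)) * lpP μ U.u := by
      unfold Sfun Ifun
      field_simp
      ring
    rw [hrel, hI]
    have h2 := hest U hnz (le_of_eq hI)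
    have h3 : μ / (2 * (μ + 1)) * c₀ ≤ μ / (2 * (μ + 1)) * lpP μ U.u :=
      mul_le_mul_of_nonneg_left h2 (by positivity)
    linarith
  · refine ⟨c₀ ^ (1 / (2 * μ + 2)), Real.rpow_pos_of_pos hc₀ _, fun U hnz hI => ?_⟩
    exact Real.rpow_le_rpow hc₀.le (hest U hnz hI) (by positivity)
end
end

section
/- Let ω > v²/(τ²+1)², τ ∈ ℝ \ {0,±1}, v > 0, μ > 0, and let (u_n) ⊂ H¹_τ \ {0} be a sequence with I_ω(u_n) ≤ 0 and S̃(u_n) → d(ω). Then (u_n) is bounded in H¹_τ. -/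
open MeasureTheory Set Filter Real

noncomputable section

lemma am_gm (ε a b : ℝ) (hε : 0 < ε) : 2 * (a * b) ≤ ε⁻¹ * a ^ 2 + ε * b ^ 2 := by
  have h1 : 0 ≤ ε⁻¹ * (a - ε * b) ^ 2 := mul_nonneg (inv_nonneg.mpr hε.le) (sq_nonneg _)
  have h2 : ε * ε⁻¹ = 1 := mul_inv_cancel₀ hε.ne'
  nlinarith [sq_nonneg (a - ε * b)]

lemma trace_left (u d : ℝ → ℝ) (uL ε : ℝ) (hε : 0 < ε)
    (hderiv : ∀ x : ℝ, x ≠ 0 → HasDerivAt u (d x) x)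
    (hlimL : Tendsto u (nhdsWithin 0 (Iio 0)) (nhds uL))
    (hint2 : Integrable (fun x => (u x) ^ 2))
    (hintd : Integrable (fun x => (d x) ^ 2)) :
    uL ^ 2 ≤ ∫ x in Iio (0:ℝ), (ε⁻¹ * u x ^ 2 + ε * d x ^ 2) := by
  set g : ℝ → ℝ := fun x => ε⁻¹ * u x ^ 2 + ε * d x ^ 2 with hg
  have hg_int : Integrable g := (hint2.const_mul _).add (hintd.const_mul _)
  have hg_nonneg : ∀ x, 0 ≤ g x := fun x =>
    add_nonneg (mul_nonneg (inv_nonneg.mpr hε.le) (sq_nonneg _))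
      (mul_nonneg hε.le (sq_nonneg _))
  -- measurability
  have humeas : AEMeasurable u volume := by
    have hucont : ContinuousOn u ({(0:ℝ)}ᶜ) := fun x hx =>
      ((hderiv x hx).continuousAt).continuousWithinAt
    have h1 : AEMeasurable u (volume.restrict ({(0:ℝ)}ᶜ)) :=
      hucont.aemeasurable (measurableSet_singleton 0).compl
    rwa [Measure.restrict_congr_set (ae_eq_univ.mpr (by simp)), Measure.restrict_univ] at h1
  have hdmeas : AEMeasurable d volume := by
    refine (measurable_deriv u).aemeasurable.congr ?_
    filter_upwards [compl_mem_ae_iff.mpr (volume_singleton (a := (0:ℝ)))] with x hx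
    exact (hderiv x hx).deriv
  -- integrability of 2 u d
  have h_ud : Integrable (fun x => 2 * (u x * d x)) := by
    refine Integrable.mono' hg_int (((humeas.mul hdmeas).const_mul 2).aestronglyMeasurable)
      (ae_of_all _ fun x => ?_)
    have h1 : ‖2 * (u x * d x)‖ = 2 * (|u x| * |d x|) := by
      rw [Real.norm_eq_abs, abs_mul, abs_mul]; norm_num
    have h2 := am_gm ε (|u x|) (|d x|) hε
    rw [h1]
    show 2 * (|u x| * |d x|) ≤ ε⁻¹ * u x ^ 2 + ε * d x ^ 2
    simpa [sq_abs] using h2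
  -- FTC
  have key : ∀ a b : ℝ, a < b → b < 0 →
      u b ^ 2 - u a ^ 2 = ∫ x in a..b, (2 * (u x * d x)) := by
    intro a b hab hb0
    refine (intervalIntegral.integral_eq_sub_of_hasDerivAt
      (f := fun y => u y ^ 2) (f' := fun y => 2 * (u y * d y)) (fun x hx => ?_)
      h_ud.intervalIntegrable).symm
    rw [uIcc_of_le hab.le] at hx
    have hx0 : x ≠ 0 := ne_of_lt (lt_of_le_of_lt hx.2 hb0)
    have := (hderiv x hx0).fun_pow 2
    simpa [mul_comm, mul_assoc, mul_left_comm] using this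
  -- interval integral bound
  have hIb : ∀ a b : ℝ, a < b → b < 0 →
      (∫ x in a..b, (2 * (u x * d x))) ≤ ∫ x in Iio (0:ℝ), g x := by
    intro a b hab hb0
    have h1 : (∫ x in a..b, (2 * (u x * d x))) ≤ ∫ x in a..b, g x :=
      intervalIntegral.integral_mono_on hab.le h_ud.intervalIntegrable
        hg_int.intervalIntegrable (fun x _ => am_gm ε (u x) (d x) hε)
    have h2 : (∫ x in a..b, g x) = ∫ x in Ioc a b, g x :=
      intervalIntegral.integral_of_le hab.le
    have h3 : (∫ x in Ioc a b, g x) ≤ ∫ x in Iio (0:ℝ), g x := by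
      refine setIntegral_mono_set hg_int.integrableOn
        (ae_of_all _ hg_nonneg) (HasSubset.Subset.eventuallyLE ?_)
      intro x hx; exact lt_of_le_of_lt hx.2 hb0
    linarith
  -- find small values at -∞
  have hsmall : ∀ b : ℝ, b < 0 → ∀ δ : ℝ, 0 < δ → ∃ a, a < b ∧ u a ^ 2 < δ := by
    intro b hb δ hδ
    by_contra h
    push_neg at h
    have hsub : Iio b ⊆ {x | δ ≤ u x ^ 2} := fun x hx => h x hx
    have h2 := hint2.measure_ge_lt_top hδ
    have h3 : volume {x | δ ≤ u x ^ 2} = ⊤ :=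
      top_le_iff.mp (by rw [← Real.volume_Iio (a := b)]; exact measure_mono hsub)
    exact h2.ne h3
  have hbound : ∀ b : ℝ, b < 0 → u b ^ 2 ≤ ∫ x in Iio (0:ℝ), g x := by
    intro b hb
    refine le_of_forall_pos_le_add fun δ hδ => ?_
    obtain ⟨a, hab, ha⟩ := hsmall b hb δ hδ
    have h1 := key a b hab hb
    have h2 := hIb a b hab hb
    linarith
  have htend : Tendsto (fun b => u b ^ 2) (nhdsWithin 0 (Iio 0)) (nhds (uL ^ 2)) :=
    hlimL.pow 2
  exact le_of_tendsto htend (eventually_of_mem self_mem_nhdsWithin hbound)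

lemma trace_right (u d : ℝ → ℝ) (uR ε : ℝ) (hε : 0 < ε)
    (hderiv : ∀ x : ℝ, x ≠ 0 → HasDerivAt u (d x) x)
    (hlimR : Tendsto u (nhdsWithin 0 (Ioi 0)) (nhds uR))
    (hint2 : Integrable (fun x => (u x) ^ 2))
    (hintd : Integrable (fun x => (d x) ^ 2)) :
    uR ^ 2 ≤ ∫ x in Ioi (0:ℝ), (ε⁻¹ * u x ^ 2 + ε * d x ^ 2) := by
  have hderiv' : ∀ x : ℝ, x ≠ 0 → HasDerivAt (fun y => u (-y)) (-d (-x)) x := by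
    intro x hx
    have h1 := hderiv (-x) (neg_ne_zero.mpr hx)
    have h2 : HasDerivAt (fun y : ℝ => -y) (-1) x := (hasDerivAt_id x).neg
    simpa [mul_comm, Function.comp_def] using h1.comp x h2
  have hneg : Tendsto (fun x : ℝ => -x) (nhdsWithin 0 (Iio 0)) (nhdsWithin 0 (Ioi 0)) := by
    have h1 : ContinuousWithinAt (fun x : ℝ => -x) (Iio 0) 0 :=
      (continuous_neg.continuousAt).continuousWithinAt
    have h2 : MapsTo (fun x : ℝ => -x) (Iio 0) (Ioi 0) := fun x hx => by
      simpa using hx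
    simpa using h1.tendsto_nhdsWithin h2
  have h := trace_left (fun x => u (-x)) (fun x => -d (-x)) uR ε hε hderiv'
    (hlimR.comp hneg)
    (by simpa using (hint2.comp_neg))
    (by simpa using (hintd.comp_neg))
  have heq : (∫ x in Iio (0:ℝ), (ε⁻¹ * u (-x) ^ 2 + ε * (-d (-x)) ^ 2))
      = ∫ x in Ioi (0:ℝ), (ε⁻¹ * u x ^ 2 + ε * d x ^ 2) := by
    have h1 : (∫ x in Iio (0:ℝ), (ε⁻¹ * u (-x) ^ 2 + ε * (-d (-x)) ^ 2))
        = ∫ x in Iic (0:ℝ), (ε⁻¹ * u (-x) ^ 2 + ε * (-d (-x)) ^ 2) :=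
      setIntegral_congr_set Iio_ae_eq_Iic
    have h2 := integral_comp_neg_Iic (c := (0:ℝ))
      (f := fun x => ε⁻¹ * u x ^ 2 + ε * d x ^ 2)
    simp only [neg_zero] at h2
    rw [h1, ← h2]
    congr 1
    ext x
    ring
  rwa [heq] at h


lemma l2Sq_split (f : ℝ → ℝ) (hf : Integrable (fun x => f x ^ 2)) :
    l2Sq f = (∫ x in Iio (0:ℝ), (f x) ^ 2) + ∫ x in Ioi (0:ℝ), (f x) ^ 2 := by
  rw [l2Sq, ← intervalIntegral.integral_Iic_add_Ioi (b := (0:ℝ)) hf.integrableOn hf.integrableOn,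
    setIntegral_congr_set (Iio_ae_eq_Iic (a := (0:ℝ))).symm]

lemma half_split (f g : ℝ → ℝ) (ε : ℝ) (s : Set ℝ)
    (hf : IntegrableOn (fun x => f x ^ 2) s) (hg : IntegrableOn (fun x => g x ^ 2) s) :
    (∫ x in s, (ε⁻¹ * f x ^ 2 + ε * g x ^ 2))
      = ε⁻¹ * (∫ x in s, f x ^ 2) + ε * ∫ x in s, g x ^ 2 := by
  rw [integral_add (hf.const_mul _) (hg.const_mul _), integral_const_mul, integral_const_mul]


set_option maxHeartbeats 1000000 in
/-- any minimizing sequence for `S̃` over `{I_ω ≤ 0}` is bounded in `H¹_τ`. -/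
theorem minimizing_sequence_bounded
    (τ v ω μ : ℝ) (hτ0 : τ ≠ 0) (hτ1 : τ ≠ 1) (hτm1 : τ ≠ -1)
    (hv : 0 < v) (hμ : 0 < μ) (hω : ω > v ^ 2 / (τ ^ 2 + 1) ^ 2)
    (U : ℕ → HtauFun τ μ) (hnz : ∀ n, Nonzero (U n))
    (hI : ∀ n, Ifun v ω μ (U n).u (U n).d (U n).uL ≤ 0)
    (hS : Tendsto (fun n => StilF μ (U n).u) atTop (nhds (dInf τ v ω μ))) :
    ∃ C : ℝ, ∀ n, HnormSq (U n).u (U n).d ≤ C := by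
  have hT0 : (0:ℝ) < τ ^ 2 + 1 := by positivity
  have hω0 : 0 < ω := lt_of_le_of_lt (by positivity) hω
  set T : ℝ := τ ^ 2 + 1 with hT
  set ε : ℝ := (v / (T * ω) + T / v) / 2 with hεdef
  have hεpos : 0 < ε := by rw [hεdef]; positivity
  have hlt : v / (T * ω) < T / v := by
    rw [div_lt_div_iff₀ (by positivity) hv]
    have h1 : v ^ 2 < ω * T ^ 2 := by
      have h2 := (div_lt_iff₀ (by positivity : (0:ℝ) < T ^ 2)).mp hω
      nlinarith
    nlinarith
  have hε1 : ε < T / v := by rw [hεdef]; linarith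
  have hε2 : v / (T * ω) < ε := by rw [hεdef]; linarith
  have hε0 : 0 < v / (T * ω) := by positivity
  have hc1 : 0 < 1 - v * ε / T := by
    rw [sub_pos, div_lt_one hT0]
    calc v * ε < v * (T / v) := mul_lt_mul_of_pos_left hε1 hv
    _ = T := by field_simp
  have hc2 : 0 < ω - v / (T * ε) := by
    rw [sub_pos, div_lt_iff₀ (by positivity)]
    have h3 := (div_lt_iff₀ (by positivity : (0:ℝ) < T * ω)).mp hε2
    nlinarith
  set δ : ℝ := min (1 - v * ε / T) (ω - v / (T * ε)) with hδdef
  have hδ : 0 < δ := lt_min hc1 hc2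
  -- bound on lpP along the sequence
  obtain ⟨M, hM⟩ := hS.bddAbove_range
  have hc : 0 < μ / (2 * (μ + 1)) := by positivity
  have hlp : ∀ n, lpP μ (U n).u ≤ M / (μ / (2 * (μ + 1))) := by
    intro n
    rw [le_div_iff₀ hc]
    have h1 : StilF μ (U n).u ≤ M := hM (mem_range_self n)
    unfold StilF at h1
    linarith [h1]
  refine ⟨(M / (μ / (2 * (μ + 1)))) / δ, fun n => ?_⟩
  set W := U n with hW
  have hL := trace_left W.u W.d W.uL ε hεpos W.hderiv W.hlimL W.hint2 W.hintd
  have hR := trace_right W.u W.d W.uR ε hεpos W.hderiv W.hlimR W.hint2 W.hintd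
  rw [half_split W.u W.d ε (Iio 0) W.hint2.integrableOn W.hintd.integrableOn] at hL
  rw [half_split W.u W.d ε (Ioi 0) W.hint2.integrableOn W.hintd.integrableOn] at hR
  have hI' : Ifun v ω μ W.u W.d W.uL ≤ 0 := hI n
  unfold Ifun at hI'
  have hsplit := l2Sq_split W.u W.hint2
  have hdn : dnormSq W.d
      = (∫ x in Iio (0:ℝ), (W.d x) ^ 2) + ∫ x in Ioi (0:ℝ), (W.d x) ^ 2 := rfl
  set au1 := ∫ x in Iio (0:ℝ), (W.u x) ^ 2 with hau1d
  set au2 := ∫ x in Ioi (0:ℝ), (W.u x) ^ 2 with hau2d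
  set ad1 := ∫ x in Iio (0:ℝ), (W.d x) ^ 2 with had1d
  set ad2 := ∫ x in Ioi (0:ℝ), (W.d x) ^ 2 with had2d
  rw [hsplit, hdn] at hI'
  have hau1 : 0 ≤ au1 := setIntegral_nonneg measurableSet_Iio fun x _ => sq_nonneg _
  have hau2 : 0 ≤ au2 := setIntegral_nonneg measurableSet_Ioi fun x _ => sq_nonneg _
  have had1 : 0 ≤ ad1 := setIntegral_nonneg measurableSet_Iio fun x _ => sq_nonneg _
  have had2 : 0 ≤ ad2 := setIntegral_nonneg measurableSet_Ioi fun x _ => sq_nonneg _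
  have h2 : T * W.uL ^ 2 ≤ ε⁻¹ * (au1 + au2) + ε * (ad1 + ad2) := by
    have hj : W.uR ^ 2 = τ ^ 2 * W.uL ^ 2 := by rw [W.hjump]; ring
    have h2a : W.uL ^ 2 + W.uR ^ 2 ≤ ε⁻¹ * au1 + ε * ad1 + (ε⁻¹ * au2 + ε * ad2) :=
      add_le_add hL hR
    rw [hj] at h2a
    rw [hT]
    linarith
  have h3 : v * W.uL ^ 2 ≤ v / (T * ε) * (au1 + au2) + v * ε / T * (ad1 + ad2) := by
    have h4 := mul_le_mul_of_nonneg_left h2 (div_pos hv hT0).le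
    have h5 : v / T * (T * W.uL ^ 2) = v * W.uL ^ 2 := by field_simp
    have h6 : v / T * (ε⁻¹ * (au1 + au2) + ε * (ad1 + ad2))
        = v / (T * ε) * (au1 + au2) + v * ε / T * (ad1 + ad2) := by
      field_simp
    rw [h5, h6] at h4
    exact h4
  have hgoal : (1 - v * ε / T) * (ad1 + ad2) + (ω - v / (T * ε)) * (au1 + au2)
      ≤ lpP μ W.u := by linarith [hI', h3]
  have hH : HnormSq W.u W.d = (au1 + au2) + (ad1 + ad2) := by
    rw [HnormSq, hsplit, hdn]
  have e1 : δ * (ad1 + ad2) ≤ (1 - v * ε / T) * (ad1 + ad2) :=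
    mul_le_mul_of_nonneg_right (min_le_left _ _) (by linarith)
  have e2 : δ * (au1 + au2) ≤ (ω - v / (T * ε)) * (au1 + au2) :=
    mul_le_mul_of_nonneg_right (min_le_right _ _) (by linarith)
  have hfin : δ * HnormSq W.u W.d ≤ M / (μ / (2 * (μ + 1))) := by
    rw [hH, mul_add]
    linarith [hgoal, e1, e2, hlp n]
  rw [le_div_iff₀ hδ]
  linarith [hfin]
end
end
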